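/- Let α_1,…,α_n be pairwise distinct elements of a finite field F_q, let δ ∈ F_q, and let k, r be integers with 6 ≤ 2k ≤ n and 2 ≤ r ≤ k−1. Then G_2 · H_2ᵀ = 0 and the rows of H_2 are linearly independent over F_q, where b = δ − ∑_{i=1}^n α_i; consequently H_2 is a parity check matrix for the code C_2 generated by G_2, i.e. the rows of H_2 form a basis of the dual code C_2^⊥ ⊆ F_q^{n+2}. -/

import Mathlib

open Finset Matrix

/-- Elementary symmetric polynomial `σ_t` evaluated at the values `x 0, …, x (m-1)`. -/
def esymmV {F : Type*} [CommRing F] {m : ℕ} (t : ℕ) (x : Fin m → F) : F :=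
  ∑ A ∈ Finset.univ.powersetCard t, ∏ i ∈ A, x i

/-- Complete homogeneous symmetric polynomial `S_t` evaluated at `x 0, …, x (m-1)`. -/
def hsymmV {F : Type*} [CommRing F] {m : ℕ} (t : ℕ) (x : Fin m → F) : F :=
  ∑ d ∈ Finset.Nat.antidiagonalTuple m t, ∏ i, x i ^ d i

/-- The exponent of the `i`-th row (0-indexed): the elements of
`{0,…,k−r−1} ∪ {k−r+1,…,k}` in increasing order. -/
def expo (k r : ℕ) (i : Fin k) : ℕ := if (i : ℕ) < k - r then (i : ℕ) else (i : ℕ) + 1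

/-- The Vandermonde product `∏_{i<j} (α_j − α_i)`. -/
def vand {F : Type*} [CommRing F] {n : ℕ} (α : Fin n → F) : F :=
  ∏ i : Fin n, ∏ j ∈ Finset.Ioi i, (α j - α i)

/-- The matrix `G_{r,k}`: rows are `(α_1^e, …, α_n^e)` for
`e ∈ {0,…,k−r−1} ∪ {k−r+1,…,k}` in increasing order. -/
def Grk {F : Type*} [Field F] {n : ℕ} (α : Fin n → F) (k r : ℕ) : Matrix (Fin k) (Fin n) F :=
  Matrix.of fun i j => α j ^ expo k r i

/-- The matrix `G_1`: `G_{r,k}` with the extra column `(0,…,0,1)ᵀ` appended. -/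
def G1 {F : Type*} [Field F] {n : ℕ} (α : Fin n → F) (k r : ℕ) :
    Matrix (Fin k) (Fin (n + 1)) F :=
  Matrix.of fun i j =>
    if hj : (j : ℕ) < n then α ⟨j, hj⟩ ^ expo k r i
    else if (i : ℕ) = k - 1 then 1 else 0

/-- The matrix `G_2`: `G_1` with the extra column `(0,…,0,1,δ)ᵀ` appended
(entry `1` in row `k−1`, i.e. index `k−2`, and `δ` in row `k`, i.e. index `k−1`). -/
def G2 {F : Type*} [Field F] {n : ℕ} (α : Fin n → F) (k r : ℕ) (δ : F) :
    Matrix (Fin k) (Fin (n + 2)) F :=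
  Matrix.of fun i j =>
    if hj : (j : ℕ) < n then α ⟨j, hj⟩ ^ expo k r i
    else if (j : ℕ) = n then (if (i : ℕ) = k - 1 then 1 else 0)
    else (if (i : ℕ) = k - 2 then 1 else if (i : ℕ) = k - 1 then δ else 0)

/-- `u_i = ∏_{j ≠ i} (α_i − α_j)⁻¹`. -/
def uCoef {F : Type*} [Field F] {n : ℕ} (α : Fin n → F) (i : Fin n) : F :=
  ∏ j ∈ Finset.univ.erase i, (α i - α j)⁻¹

/-- `Λ_{r,i} = ∑_{j=0}^{r} (−1)^j σ_j α_i^{(n−k)+(r−1)−j}`. -/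
def Lam {F : Type*} [Field F] {n : ℕ} (α : Fin n → F) (k r : ℕ) (i : Fin n) : F :=
  ∑ j ∈ Finset.range (r + 1), (-1 : F) ^ j * esymmV j α * α i ^ ((n - k) + (r - 1) - j)

/-- Every `k×k` submatrix of `G` is nonsingular. -/
def allSubNonsing {F : Type*} [Field F] {k m : ℕ} (G : Matrix (Fin k) (Fin m) F) : Prop :=
  ∀ c : Fin k → Fin m, Function.Injective c → (G.submatrix id c).det ≠ 0

/-- The linear code spanned by the rows of `G`. -/
def rowSpan {F : Type*} [Field F] {k m : ℕ} (G : Matrix (Fin k) (Fin m) F) :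
    Submodule F (Fin m → F) :=
  Submodule.span F (Set.range fun i => G i)

/-- The dual code `C^⊥ = {x : ∑ x_i c_i = 0 for all c ∈ C}`, as a set. -/
def dualSet {F : Type*} [Field F] {m : ℕ} (C : Set (Fin m → F)) : Set (Fin m → F) :=
  {x | ∀ c ∈ C, ∑ i, x i * c i = 0}

/-- The extended code of `C` with respect to `w`. -/
def extCode {F : Type*} [Field F] {m : ℕ} (C : Set (Fin m → F)) (w : Fin m → F) :
    Set (Fin (m + 1) → F) :=
  {y | ∃ c ∈ C, (∀ i : Fin m, y (Fin.castSucc i) = c i) ∧ y (Fin.last m) = ∑ i, w i * c i}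

/-- The parity check matrix `H_{r,k}`: the first `n−k−1` rows are
`(u_1 α_1^e, …, u_n α_n^e)` for `e = 0,…,n−k−2` and the last row is
`(u_1 Λ_{r,1}, …, u_n Λ_{r,n})`. -/
def Hrk {F : Type*} [Field F] {n : ℕ} (α : Fin n → F) (k r : ℕ) :
    Matrix (Fin (n - k)) (Fin n) F :=
  Matrix.of fun i j =>
    if (i : ℕ) < n - k - 1 then uCoef α j * α j ^ (i : ℕ)
    else uCoef α j * Lam α k r j

/-- The parity check matrix `H_1`. -/
def H1 {F : Type*} [Field F] {n : ℕ} (α : Fin n → F) (k r : ℕ) :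
    Matrix (Fin (n - k + 1)) (Fin (n + 1)) F :=
  Matrix.of fun i j =>
    if hj : (j : ℕ) < n then
      (if (i : ℕ) < n - k - 1 then uCoef α ⟨j, hj⟩ * α ⟨j, hj⟩ ^ (i : ℕ)
       else if (i : ℕ) = n - k - 1 then uCoef α ⟨j, hj⟩ * Lam α k r ⟨j, hj⟩
       else uCoef α ⟨j, hj⟩ * α ⟨j, hj⟩ ^ (n - k - 1))
    else (if (i : ℕ) = n - k then -1 else 0)

/-- The parity check matrix `H_2` (case `2 ≤ r`), with parameter `b`. -/
def H2 {F : Type*} [Field F] {n : ℕ} (α : Fin n → F) (k r : ℕ) (b : F) :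
    Matrix (Fin (n - k + 2)) (Fin (n + 2)) F :=
  Matrix.of fun i j =>
    if hj : (j : ℕ) < n then
      (if (i : ℕ) < n - k - 1 then uCoef α ⟨j, hj⟩ * α ⟨j, hj⟩ ^ (i : ℕ)
       else if (i : ℕ) = n - k - 1 then uCoef α ⟨j, hj⟩ * Lam α k r ⟨j, hj⟩
       else if (i : ℕ) = n - k then uCoef α ⟨j, hj⟩ * α ⟨j, hj⟩ ^ (n - k - 1)
       else uCoef α ⟨j, hj⟩ * α ⟨j, hj⟩ ^ (n - k))
    else if (j : ℕ) = n then
      (if (i : ℕ) = n - k then -1 else if (i : ℕ) = n - k + 1 then b else 0)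
    else (if (i : ℕ) = n - k + 1 then -1 else 0)


/-! ### Auxiliary lemmas -/

namespace ParityAux

open Polynomial

section Basic
variable {F : Type*} [Field F] {n : ℕ} (α : Fin n → F) (hα : Function.Injective α)

lemma uCoef_eq : uCoef α = Lagrange.nodalWeight Finset.univ α := rfl

include hα in
lemma uCoef_ne_zero (j : Fin n) : uCoef α j ≠ 0 := by
  rw [uCoef, Finset.prod_ne_zero_iff]
  intro i hi
  exact inv_ne_zero (sub_ne_zero_of_ne fun hh => (Finset.mem_erase.mp hi).1 (hα hh).symm)

lemma esymmV_zero : esymmV 0 α = 1 := by simp [esymmV]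

lemma esymmV_one : esymmV 1 α = ∑ j, α j := by
  simp [esymmV, Finset.powersetCard_one]

lemma esymmV_eq (t : ℕ) : esymmV t α = ((Finset.univ.val.map α).esymm t) := by
  rw [Finset.esymm_map_val]; rfl

lemma basis_coeff (j : Fin n) :
    (Lagrange.basis Finset.univ α j).coeff (n - 1) = uCoef α j := by
  rw [Lagrange.basis_eq_prod_sub_inv_mul_nodal_div (mem_univ j),
    ← Lagrange.nodal_erase_eq_nodal_div (mem_univ j), Polynomial.coeff_C_mul]
  have hm : (Lagrange.nodal (univ.erase j) α).Monic := Lagrange.nodal_monic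
  have hd : (Lagrange.nodal (univ.erase j) α).natDegree = n - 1 := by
    rw [Lagrange.natDegree_nodal]
    simp [Finset.card_erase_of_mem]
  rw [← hd, hm.coeff_natDegree, mul_one, uCoef_eq]

include hα in
lemma sum_u_eval (f : F[X]) (hf : f.degree < n) :
    ∑ j, uCoef α j * f.eval (α j) = f.coeff (n - 1) := by
  have hvs : Set.InjOn α (Finset.univ : Finset (Fin n)) := hα.injOn
  have hinterp : f = Lagrange.interpolate Finset.univ α (fun j => f.eval (α j)) :=
    Lagrange.eq_interpolate hvs (by simpa using hf)
  conv_rhs => rw [hinterp]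
  rw [Lagrange.interpolate_apply, Polynomial.finset_sum_coeff]
  refine Finset.sum_congr rfl fun j _ => ?_
  rw [Polynomial.coeff_C_mul, basis_coeff, mul_comm]

include hα in
lemma Tsum_lt {e : ℕ} (he : e < n - 1) : ∑ j, uCoef α j * α j ^ e = 0 := by
  have h := sum_u_eval α hα (X ^ e) (by
    rw [degree_X_pow]; exact_mod_cast lt_of_lt_of_le he (by omega))
  rw [coeff_X_pow, if_neg (by omega : ¬ (n-1 = e))] at h
  simpa using h

include hα in
lemma Tsum_top (hn : 0 < n) : ∑ j, uCoef α j * α j ^ (n - 1) = 1 := by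
  have h := sum_u_eval α hα (X ^ (n-1)) (by
    rw [degree_X_pow]; exact_mod_cast (by omega : n - 1 < n))
  simpa [coeff_X_pow] using h

lemma nodal_eq_sum :
    Lagrange.nodal Finset.univ α
      = ∑ t ∈ Finset.range (n + 1), C ((-1 : F) ^ t * esymmV t α) * X ^ (n - t) := by
  have h := Multiset.prod_X_sub_X_eq_sum_esymm (Finset.univ.val.map α)
  rw [Multiset.map_map] at h
  have hcard : Multiset.card (Finset.univ.val.map α) = n := by simp
  rw [hcard] at h
  calc Lagrange.nodal Finset.univ α
      = (Finset.univ.val.map (fun j => X - C (α j))).prod := rfl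
    _ = ∑ t ∈ Finset.range (n + 1), C ((-1 : F) ^ t * esymmV t α) * X ^ (n - t) := by
        rw [show (fun j => X - C (α j)) = ((fun t => X - C t) ∘ α) from rfl, h]
        refine Finset.sum_congr rfl fun t _ => ?_
        rw [esymmV_eq]
        rw [mul_comm ((-1:F)^t), C_mul, C_pow, C_neg, C_1]
        ring

lemma vieta_eval (j0 : Fin n) :
    ∑ t ∈ Finset.range (n + 1), (-1 : F) ^ t * esymmV t α * α j0 ^ (n - t) = 0 := by
  have h := Lagrange.eval_nodal_at_node (v := α) (mem_univ j0)
  rw [nodal_eq_sum, Polynomial.eval_finset_sum] at h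
  simpa using h

lemma vieta_T (m : ℕ) :
    ∑ t ∈ Finset.range (n + 1),
      (-1 : F) ^ t * esymmV t α * (∑ j, uCoef α j * α j ^ (m + (n - t))) = 0 := by
  have key : ∑ j, uCoef α j *
      (α j ^ m * ∑ t ∈ Finset.range (n + 1), (-1 : F) ^ t * esymmV t α * α j ^ (n - t)) = 0 :=
    Finset.sum_eq_zero fun j _ => by rw [vieta_eval α j]; ring
  rw [← key]
  simp only [Finset.mul_sum]
  rw [Finset.sum_comm]
  refine Finset.sum_congr rfl fun j _ => Finset.sum_congr rfl fun t _ => ?_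
  rw [pow_add]; ring

include hα in
lemma Tsum_n (hn : 0 < n) : ∑ j, uCoef α j * α j ^ n = ∑ j, α j := by
  obtain ⟨m, rfl⟩ : ∃ m, n = m + 1 := ⟨n - 1, by omega⟩
  have h := vieta_T α (m := 0)
  rw [Finset.sum_range_succ', Finset.sum_range_succ'] at h
  have hz : ∀ t ∈ Finset.range m, (-1 : F) ^ (t + 1 + 1) * esymmV (t + 1 + 1) α *
      (∑ j, uCoef α j * α j ^ (0 + (m + 1 - (t + 1 + 1)))) = 0 := fun t ht => by
    rw [Tsum_lt α hα (by simp at ht; omega), mul_zero]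
  rw [Finset.sum_eq_zero hz] at h
  have h1 : (0 : ℕ) + (m + 1 - (0 + 1)) = m + 1 - 1 := by omega
  rw [h1, Tsum_top α hα (by omega)] at h
  simp only [zero_add, pow_zero, pow_one, esymmV_zero, one_mul, mul_one] at h
  rw [esymmV_one, show m + 1 - 0 = m + 1 from rfl] at h
  linear_combination h

include hα in
lemma sum_u_pow_Lam {k r : ℕ} (hr2 : 2 ≤ r) (hrk : r + 1 ≤ k) (hkn : 2 * k ≤ n) (hk3 : 3 ≤ k)
    (m : ℕ) (hm : m ≤ k) (hne : m ≠ k - r) :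
    ∑ j, uCoef α j * (α j ^ m * Lam α k r j) = 0 := by
  have hswap : ∑ j, uCoef α j * (α j ^ m * Lam α k r j)
      = ∑ t ∈ Finset.range (r + 1),
          (-1 : F) ^ t * esymmV t α * (∑ j, uCoef α j * α j ^ (m + ((n - k) + (r - 1) - t))) := by
    simp only [Lam, Finset.mul_sum]
    rw [Finset.sum_comm]
    refine Finset.sum_congr rfl fun t _ => Finset.sum_congr rfl fun j _ => ?_
    rw [pow_add]; ring
  rw [hswap]
  rcases lt_or_gt_of_ne hne with hlt | hgt
  · refine Finset.sum_eq_zero fun t ht => ?_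
    rw [Tsum_lt α hα (by simp only [Finset.mem_range] at ht; omega), mul_zero]
  · set p := m - (k - r) with hp
    have hp1 : 1 ≤ p := by omega
    have hpr : p ≤ r := by omega
    have hrw : ∀ t ∈ Finset.range (r + 1),
        (-1 : F) ^ t * esymmV t α * (∑ j, uCoef α j * α j ^ (m + ((n - k) + (r - 1) - t)))
        = (-1 : F) ^ t * esymmV t α * (∑ j, uCoef α j * α j ^ ((p - 1) + (n - t))) := by
      intro t ht
      simp only [Finset.mem_range] at ht
      have : m + ((n - k) + (r - 1) - t) = (p - 1) + (n - t) := by omega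
      rw [this]
    rw [Finset.sum_congr rfl hrw,
      Finset.sum_subset (Finset.range_subset_range.2 (by omega : r + 1 ≤ n + 1))
        (fun t ht hnt => ?_), vieta_T α (p - 1)]
    simp only [Finset.mem_range] at ht hnt
    rw [Tsum_lt α hα (by omega), mul_zero]

end Basic

section Entries
variable {F : Type*} [Field F] {n : ℕ} (α : Fin n → F) (hα : Function.Injective α) {k r : ℕ}
  (δ : F)

lemma sum_split {M : Type*} [AddCommMonoid M] (g : Fin (n + 2) → M) :
    ∑ j, g j = (∑ j : Fin n, g (Fin.castSucc (Fin.castSucc j)))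
      + g (Fin.castSucc (Fin.last n)) + g (Fin.last (n + 1)) := by
  rw [Fin.sum_univ_castSucc, Fin.sum_univ_castSucc]

lemma G2_left (t : Fin k) (j : Fin n) :
    G2 α k r δ t (Fin.castSucc (Fin.castSucc j)) = α j ^ expo k r t := by
  simp [G2]

lemma G2_mid (t : Fin k) :
    G2 α k r δ t (Fin.castSucc (Fin.last n)) = if (t : ℕ) = k - 1 then 1 else 0 := by
  simp [G2]

lemma G2_right (t : Fin k) :
    G2 α k r δ t (Fin.last (n + 1))
      = if (t : ℕ) = k - 2 then 1 else if (t : ℕ) = k - 1 then δ else 0 := by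
  simp [G2]

lemma H2_left (b : F) (s : Fin (n - k + 2)) (j : Fin n) :
    H2 α k r b s (Fin.castSucc (Fin.castSucc j))
      = (if (s : ℕ) < n - k - 1 then uCoef α j * α j ^ (s : ℕ)
         else if (s : ℕ) = n - k - 1 then uCoef α j * Lam α k r j
         else if (s : ℕ) = n - k then uCoef α j * α j ^ (n - k - 1)
         else uCoef α j * α j ^ (n - k)) := by
  simp [H2]

lemma H2_mid (b : F) (s : Fin (n - k + 2)) :
    H2 α k r b s (Fin.castSucc (Fin.last n))
      = (if (s : ℕ) = n - k then -1 else if (s : ℕ) = n - k + 1 then b else 0) := by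
  simp [H2]

lemma H2_right (b : F) (s : Fin (n - k + 2)) :
    H2 α k r b s (Fin.last (n + 1)) = (if (s : ℕ) = n - k + 1 then -1 else 0) := by
  simp [H2]

lemma expo_le (t : Fin k) : expo k r t ≤ k := by
  unfold expo; split <;> omega

lemma conv_sum (e c : ℕ) :
    ∑ x, α x ^ e * (uCoef α x * α x ^ c) = ∑ x, uCoef α x * α x ^ (e + c) :=
  Finset.sum_congr rfl fun x _ => by rw [pow_add]; ring

include hα in
lemma GH_zero (h6 : 6 ≤ 2 * k) (hkn : 2 * k ≤ n) (hr2 : 2 ≤ r) (hrk : r ≤ k - 1) :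
    G2 α k r δ * (H2 α k r (δ - ∑ i, α i))ᵀ = 0 := by
  have hk3 : 3 ≤ k := by omega
  have hrk' : r + 1 ≤ k := by omega
  have hn6 : 6 ≤ n := by omega
  set b := δ - ∑ i, α i with hb
  ext t s
  rw [Matrix.mul_apply, Matrix.zero_apply]
  simp only [Matrix.transpose_apply]
  rw [sum_split (fun j => G2 α k r δ t j * H2 α k r b s j)]
  simp only [G2_left, G2_mid, G2_right, H2_left, H2_mid, H2_right]
  have hs4 : (s : ℕ) < n - k - 1 ∨ (s : ℕ) = n - k - 1 ∨ (s : ℕ) = n - k ∨ (s : ℕ) = n - k + 1 := by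
    have := s.isLt; omega
  have hexp := expo_le (r := r) t
  have htlt := t.isLt
  rcases hs4 with hs | hs | hs | hs
  · simp only [if_pos hs, if_neg (show ¬ (s:ℕ) = n - k by omega),
      if_neg (show ¬ (s:ℕ) = n - k + 1 by omega), mul_zero, add_zero]
    rw [conv_sum, Tsum_lt α hα (by omega)]
  · simp only [if_neg (show ¬ (s:ℕ) < n - k - 1 by omega), if_pos hs,
      if_neg (show ¬ (s:ℕ) = n - k by omega),
      if_neg (show ¬ (s:ℕ) = n - k + 1 by omega), mul_zero, add_zero]
    have hconv : ∑ x, α x ^ expo k r t * (uCoef α x * Lam α k r x)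
        = ∑ x, uCoef α x * (α x ^ expo k r t * Lam α k r x) :=
      Finset.sum_congr rfl fun x _ => by ring
    rw [hconv, sum_u_pow_Lam α hα hr2 hrk' hkn hk3 _ hexp
      (by unfold expo; split <;> omega)]
  · simp only [if_neg (show ¬ (s:ℕ) < n - k - 1 by omega),
      if_neg (show ¬ (s:ℕ) = n - k - 1 by omega), if_pos hs,
      if_neg (show ¬ (s:ℕ) = n - k + 1 by omega), mul_zero, add_zero]
    rw [conv_sum]
    by_cases ht : (t : ℕ) = k - 1
    · have he : expo k r t = k := by unfold expo; split <;> omega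
      rw [he, show k + (n - k - 1) = n - 1 by omega, Tsum_top α hα (by omega), if_pos ht]
      ring
    · have he : expo k r t ≤ k - 1 := by unfold expo; split <;> omega
      rw [Tsum_lt α hα (by omega), if_neg ht]
      ring
  · simp only [if_neg (show ¬ (s:ℕ) < n - k - 1 by omega),
      if_neg (show ¬ (s:ℕ) = n - k - 1 by omega),
      if_neg (show ¬ (s:ℕ) = n - k by omega), if_pos hs]
    rw [conv_sum]
    by_cases ht1 : (t : ℕ) = k - 1
    · have he : expo k r t = k := by unfold expo; split <;> omega
      rw [he, show k + (n - k) = n by omega, Tsum_n α hα (by omega), if_pos ht1,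
        if_neg (show ¬ (t:ℕ) = k - 2 by omega), if_pos ht1, hb]
      ring
    · by_cases ht2 : (t : ℕ) = k - 2
      · have he : expo k r t = k - 1 := by unfold expo; split <;> omega
        rw [he, show k - 1 + (n - k) = n - 1 by omega, Tsum_top α hα (by omega),
          if_neg ht1, if_pos ht2]
        ring
      · have he : expo k r t ≤ k - 2 := by unfold expo; split <;> omega
        rw [Tsum_lt α hα (by omega), if_neg ht1, if_neg ht2, if_neg ht1]
        ring

end Entries

section Indep

/-- The polynomial whose evaluations give `Λ`. -/
noncomputable def LamP {F : Type*} [Field F] {n : ℕ} (α : Fin n → F) (k r : ℕ) : Polynomial F :=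
  ∑ t ∈ Finset.range (r + 1), C ((-1 : F) ^ t * esymmV t α) * X ^ (n - k + r - 1 - t)

variable {F : Type*} [Field F] {n : ℕ} (α : Fin n → F) (hα : Function.Injective α) {k r : ℕ}

lemma Lam_eval (hr1 : 1 ≤ r) (j : Fin n) : Lam α k r j = (LamP α k r).eval (α j) := by
  unfold Lam LamP
  rw [eval_finset_sum]
  refine Finset.sum_congr rfl fun t _ => ?_
  rw [eval_mul, eval_C, eval_pow, eval_X]
  congr 2
  omega

lemma LamP_degree : (LamP α k r).degree ≤ ((n - k + r - 1 : ℕ) : WithBot ℕ) := by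
  refine (degree_sum_le _ _).trans ?_
  rw [Finset.sup_le_iff]
  intro t _
  refine (degree_C_mul_X_pow_le _ _).trans ?_
  exact Nat.cast_le.mpr (by omega)

lemma LamP_coeff_top (hr1 : 1 ≤ r) (hnk : 1 ≤ n - k) :
    (LamP α k r).coeff (n - k + r - 1) = 1 := by
  unfold LamP
  rw [finset_sum_coeff]
  rw [Finset.sum_eq_single 0]
  · rw [coeff_C_mul, coeff_X_pow, if_pos (by omega), pow_zero, esymmV_zero, one_mul, mul_one]
  · intro t ht hne
    simp only [Finset.mem_range] at ht
    rw [coeff_C_mul, coeff_X_pow, if_neg (by omega), mul_zero]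
  · intro h
    exact absurd (Finset.mem_range.mpr (by omega)) h

lemma LamP_coeff_low {d : ℕ} (hd : d < n - k - 1) :
    (LamP α k r).coeff d = 0 := by
  unfold LamP
  rw [finset_sum_coeff]
  refine Finset.sum_eq_zero fun t ht => ?_
  simp only [Finset.mem_range] at ht
  rw [coeff_C_mul, coeff_X_pow, if_neg (by omega), mul_zero]

/-- The polynomials attached to the rows of `H2`. -/
noncomputable def Qs {F : Type*} [Field F] {n : ℕ} (α : Fin n → F) (k r : ℕ)
    (s : Fin (n - k + 2)) : Polynomial F :=
  if (s : ℕ) < n - k - 1 then X ^ (s : ℕ)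
  else if (s : ℕ) = n - k - 1 then LamP α k r
  else if (s : ℕ) = n - k then X ^ (n - k - 1)
  else X ^ (n - k)

lemma H2_left_eval (hr1 : 1 ≤ r) (b : F) (s : Fin (n - k + 2)) (j : Fin n) :
    H2 α k r b s (Fin.castSucc (Fin.castSucc j))
      = uCoef α j * (Qs α k r s).eval (α j) := by
  rw [H2_left]
  unfold Qs
  split_ifs <;> simp [Lam_eval α hr1]

lemma sum_if_coe {m : ℕ} (g v : Fin m → F) (c : ℕ) (hc : c < m) :
    ∑ s, g s * (if (s : ℕ) = c then v s else 0) = g ⟨c, hc⟩ * v ⟨c, hc⟩ := by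
  rw [Finset.sum_eq_single (⟨c, hc⟩ : Fin m)]
  · simp
  · intro s _ hne
    rw [if_neg (fun hh => hne (Fin.ext hh)), mul_zero]
  · simp

include hα in
lemma H2_rows_indep (h6 : 6 ≤ 2 * k) (hkn : 2 * k ≤ n) (hr2 : 2 ≤ r) (hrk : r ≤ k - 1) (b : F) :
    LinearIndependent F (fun i => H2 α k r b i) := by
  have hk3 : 3 ≤ k := by omega
  have hn6 : 6 ≤ n := by omega
  have hr1 : 1 ≤ r := by omega
  rw [Fintype.linearIndependent_iff]
  intro g hg
  have hg' : ∀ j : Fin (n + 2), ∑ s, g s * H2 α k r b s j = 0 := by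
    intro j
    have h := congrFun hg j
    simpa using h
  have hlast : g ⟨n - k + 1, by omega⟩ = 0 := by
    have h := hg' (Fin.last (n + 1))
    simp only [H2_right] at h
    rw [sum_if_coe g (fun _ => (-1 : F)) (n - k + 1) (by omega)] at h
    have := mul_eq_zero.mp h
    simpa using this
  have hmid : g ⟨n - k, by omega⟩ = 0 := by
    have h := hg' (Fin.castSucc (Fin.last n))
    simp only [H2_mid] at h
    have hsplit : ∀ s : Fin (n - k + 2),
        g s * (if (s : ℕ) = n - k then (-1 : F) else if (s : ℕ) = n - k + 1 then b else 0)
        = g s * (if (s : ℕ) = n - k then (-1 : F) else 0)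
          + g s * (if (s : ℕ) = n - k + 1 then b else 0) := by
      intro s
      by_cases h1 : (s : ℕ) = n - k
      · rw [if_pos h1, if_pos h1, if_neg (by omega), mul_zero, add_zero]
      · rw [if_neg h1, if_neg h1, mul_zero, zero_add]
    rw [Finset.sum_congr rfl (fun s _ => hsplit s), Finset.sum_add_distrib,
      sum_if_coe g (fun _ => (-1 : F)) (n - k) (by omega),
      sum_if_coe g (fun _ => b) (n - k + 1) (by omega), hlast] at h
    have : g ⟨n - k, by omega⟩ * (-1 : F) = 0 := by linear_combination h
    have := mul_eq_zero.mp this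
    simpa using this
  have heval : ∀ j : Fin n, (∑ s, C (g s) * Qs α k r s).eval (α j) = 0 := by
    intro j
    have h := hg' (Fin.castSucc (Fin.castSucc j))
    simp only [H2_left_eval α hr1] at h
    have h2 : uCoef α j * ∑ s, g s * (Qs α k r s).eval (α j) = 0 := by
      rw [Finset.mul_sum, ← h]
      exact Finset.sum_congr rfl fun s _ => by ring
    have h3 := (mul_eq_zero.mp h2).resolve_left (uCoef_ne_zero α hα j)
    rw [eval_finset_sum]
    simpa using h3
  have hQ : (∑ s, C (g s) * Qs α k r s) = 0 := by
    refine Polynomial.eq_zero_of_degree_lt_of_eval_index_eq_zero (v := α) Finset.univ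
      hα.injOn ?_ (fun j _ => heval j)
    rw [Finset.card_univ, Fintype.card_fin]
    refine lt_of_le_of_lt (degree_sum_le _ _) ?_
    rw [Finset.sup_lt_iff (by exact_mod_cast WithBot.bot_lt_coe n)]
    intro s _
    have hC : ((C (g s) : Polynomial F) * Qs α k r s).degree ≤ (Qs α k r s).degree := by
      refine (degree_mul_le _ _).trans ?_
      calc (C (g s)).degree + (Qs α k r s).degree ≤ 0 + (Qs α k r s).degree :=
            add_le_add degree_C_le le_rfl
        _ = (Qs α k r s).degree := zero_add _
    refine lt_of_le_of_lt hC ?_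
    have hslt := s.isLt
    unfold Qs
    split_ifs
    · rw [degree_X_pow]; exact_mod_cast (by omega : (s : ℕ) < n)
    · exact lt_of_le_of_lt (LamP_degree α) (by exact_mod_cast (by omega : n - k + r - 1 < n))
    · rw [degree_X_pow]; exact_mod_cast (by omega : n - k - 1 < n)
    · rw [degree_X_pow]; exact_mod_cast (by omega : n - k < n)
  have hcoeff : ∀ d, ∑ s, g s * (Qs α k r s).coeff d = 0 := by
    intro d
    have h := congrArg (fun p => Polynomial.coeff p d) hQ
    simpa [finset_sum_coeff, coeff_C_mul] using h
  have h_nk1 : g ⟨n - k - 1, by omega⟩ = 0 := by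
    have h := hcoeff (n - k + r - 1)
    have hconv : ∀ s : Fin (n - k + 2),
        (Qs α k r s).coeff (n - k + r - 1) = if (s : ℕ) = n - k - 1 then 1 else 0 := by
      intro s
      have hslt := s.isLt
      rcases (by omega : (s:ℕ) < n-k-1 ∨ (s:ℕ) = n-k-1 ∨ (s:ℕ) = n-k ∨ (s:ℕ) = n-k+1)
        with hcase | hcase | hcase | hcase
      · unfold Qs
        rw [if_pos hcase, coeff_X_pow, if_neg (by omega), if_neg (by omega)]
      · unfold Qs
        rw [if_neg (by omega), if_pos hcase, LamP_coeff_top α hr1 (by omega), if_pos hcase]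
      · unfold Qs
        rw [if_neg (by omega), if_neg (by omega), if_pos hcase, coeff_X_pow,
          if_neg (by omega), if_neg (by omega)]
      · unfold Qs
        rw [if_neg (by omega), if_neg (by omega), if_neg (by omega), coeff_X_pow,
          if_neg (by omega), if_neg (by omega)]
    rw [Finset.sum_congr rfl (fun s _ => by rw [hconv s]),
      sum_if_coe g (fun _ => (1 : F)) (n - k - 1) (by omega)] at h
    simpa using h
  have hlow : ∀ d, ∀ _ : d < n - k - 1, g ⟨d, by omega⟩ = 0 := by
    intro d hd
    have h := hcoeff d
    have hconv : ∀ s : Fin (n - k + 2),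
        (Qs α k r s).coeff d = if (s : ℕ) = d then 1 else 0 := by
      intro s
      have hslt := s.isLt
      rcases (by omega : (s:ℕ) < n-k-1 ∨ (s:ℕ) = n-k-1 ∨ (s:ℕ) = n-k ∨ (s:ℕ) = n-k+1)
        with hcase | hcase | hcase | hcase
      · unfold Qs
        rw [if_pos hcase, coeff_X_pow]
        exact if_congr eq_comm rfl rfl
      · unfold Qs
        rw [if_neg (by omega), if_pos hcase, LamP_coeff_low α hd, if_neg (by omega)]
      · unfold Qs
        rw [if_neg (by omega), if_neg (by omega), if_pos hcase, coeff_X_pow,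
          if_neg (by omega), if_neg (by omega)]
      · unfold Qs
        rw [if_neg (by omega), if_neg (by omega), if_neg (by omega), coeff_X_pow,
          if_neg (by omega), if_neg (by omega)]
    rw [Finset.sum_congr rfl (fun s _ => by rw [hconv s]),
      sum_if_coe g (fun _ => (1 : F)) d (by omega)] at h
    simpa using h
  intro s
  have hslt := s.isLt
  rcases (by omega : (s:ℕ) < n-k-1 ∨ (s:ℕ) = n-k-1 ∨ (s:ℕ) = n-k ∨ (s:ℕ) = n-k+1)
    with hcase | hcase | hcase | hcase
  · have h := hlow (s : ℕ) hcase
    rwa [Fin.eta] at h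
  · have h := h_nk1
    rwa [show (⟨n - k - 1, by omega⟩ : Fin (n - k + 2)) = s from
      (Fin.ext (show n - k - 1 = (s : ℕ) by omega))] at h
  · have h := hmid
    rwa [show (⟨n - k, by omega⟩ : Fin (n - k + 2)) = s from
      (Fin.ext (show n - k = (s : ℕ) by omega))] at h
  · have h := hlast
    rwa [show (⟨n - k + 1, by omega⟩ : Fin (n - k + 2)) = s from
      (Fin.ext (show n - k + 1 = (s : ℕ) by omega))] at h

end Indep

section Dual
variable {F : Type*} [Field F] {n : ℕ} (α : Fin n → F) (hα : Function.Injective α) {k r : ℕ}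
  (δ : F)

lemma expo_inj (hrk' : r + 1 ≤ k) : ∀ t t' : Fin k, expo k r t = expo k r t' → t = t' := by
  intro t t' h
  apply Fin.ext
  revert h
  unfold expo
  split <;> split <;> omega

include hα in
lemma G2_rows_indep (h6 : 6 ≤ 2 * k) (hkn : 2 * k ≤ n) (hr2 : 2 ≤ r) (hrk : r ≤ k - 1) :
    LinearIndependent F (fun t => G2 α k r δ t) := by
  have hrk' : r + 1 ≤ k := by omega
  rw [Fintype.linearIndependent_iff]
  intro c hc
  have hc' : ∀ j : Fin (n + 2), ∑ t, c t * G2 α k r δ t j = 0 := by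
    intro j
    have h := congrFun hc j
    simpa using h
  have heval : ∀ j : Fin n, (∑ t, C (c t) * X ^ (expo k r t) : Polynomial F).eval (α j) = 0 := by
    intro j
    have h := hc' (Fin.castSucc (Fin.castSucc j))
    simp only [G2_left] at h
    rw [eval_finset_sum]
    simpa using h
  have hP : (∑ t, C (c t) * X ^ (expo k r t) : Polynomial F) = 0 := by
    refine Polynomial.eq_zero_of_degree_lt_of_eval_index_eq_zero (v := α) Finset.univ
      hα.injOn ?_ (fun j _ => heval j)
    rw [Finset.card_univ, Fintype.card_fin]
    refine lt_of_le_of_lt (degree_sum_le _ _) ?_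
    rw [Finset.sup_lt_iff (by exact_mod_cast WithBot.bot_lt_coe n)]
    intro t _
    refine lt_of_le_of_lt (degree_C_mul_X_pow_le _ _) ?_
    exact_mod_cast (show expo k r t < n by have := expo_le (r := r) t; omega)
  intro t
  have h := congrArg (fun p => Polynomial.coeff p (expo k r t)) hP
  simp only [finset_sum_coeff, coeff_C_mul, coeff_X_pow, coeff_zero] at h
  rw [Finset.sum_eq_single t] at h
  · simpa using h
  · intro t' _ hne
    rw [if_neg (fun hh => hne (expo_inj hrk' t' t hh.symm)), mul_zero]
  · simp

end Dual

end ParityAux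

/-- Theorem 5.1: for `2 ≤ r ≤ k−1`, `H_2` (with `b = δ − ∑ α_i`) is a parity check
matrix for the code `C_2` generated by `G_2`. -/
theorem H2_parity_check {F : Type*} [Field F] [Fintype F] {n : ℕ}
    (α : Fin n → F) (hα : Function.Injective α) (δ : F) (k r : ℕ)
    (h6 : 6 ≤ 2 * k) (hkn : 2 * k ≤ n) (hr2 : 2 ≤ r) (hrk : r ≤ k - 1) :
    G2 α k r δ * (H2 α k r (δ - ∑ i, α i))ᵀ = 0 ∧
    LinearIndependent F (fun i => H2 α k r (δ - ∑ i, α i) i) ∧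
    (rowSpan (H2 α k r (δ - ∑ i, α i)) : Set (Fin (n + 2) → F))
      = dualSet (rowSpan (G2 α k r δ) : Set (Fin (n + 2) → F)) := by
  classical
  have h1 : G2 α k r δ * (H2 α k r (δ - ∑ i, α i))ᵀ = 0 :=
    ParityAux.GH_zero α hα δ h6 hkn hr2 hrk
  have h2 : LinearIndependent F (fun i => H2 α k r (δ - ∑ i, α i) i) :=
    ParityAux.H2_rows_indep α hα h6 hkn hr2 hrk _
  refine ⟨h1, h2, ?_⟩
  set b := δ - ∑ i, α i with hb
  set K := LinearMap.ker (G2 α k r δ).mulVecLin with hK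
  have hmem : ∀ x : Fin (n + 2) → F,
      x ∈ K ↔ ∀ t : Fin k, ∑ i, G2 α k r δ t i * x i = 0 := by
    intro x
    rw [LinearMap.mem_ker]
    constructor
    · intro hx t
      have := congrFun hx t
      simpa [Matrix.mulVecLin_apply, Matrix.mulVec, dotProduct] using this
    · intro hx
      funext t
      simpa [Matrix.mulVecLin_apply, Matrix.mulVec, dotProduct] using hx t
  have hKd : dualSet (rowSpan (G2 α k r δ) : Set (Fin (n + 2) → F)) = (K : Set (Fin (n + 2) → F)) := by
    ext x
    simp only [dualSet, Set.mem_setOf_eq, SetLike.mem_coe]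
    constructor
    · intro hx
      rw [hmem]
      intro t
      have hx2 := hx (G2 α k r δ t) (Submodule.subset_span ⟨t, rfl⟩)
      rw [← hx2]
      exact Finset.sum_congr rfl fun i _ => mul_comm _ _
    · intro hx c hc
      rw [hmem] at hx
      induction hc using Submodule.span_induction with
      | mem c hcmem =>
          obtain ⟨t, rfl⟩ := hcmem
          rw [← hx t]
          exact Finset.sum_congr rfl fun i _ => mul_comm _ _
      | zero => simp
      | add c c' hc hc' ihc ihc' =>
          simp only [Pi.add_apply, mul_add, Finset.sum_add_distrib, ihc, ihc', add_zero]
      | smul a c hc ihc =>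
          calc ∑ i, x i * (a • c) i = a * ∑ i, x i * c i := by
                rw [Finset.mul_sum]
                refine Finset.sum_congr rfl fun i _ => ?_
                simp only [Pi.smul_apply, smul_eq_mul]
                ring
            _ = 0 := by rw [ihc, mul_zero]
  have hle : rowSpan (H2 α k r b) ≤ K := by
    rw [rowSpan, Submodule.span_le]
    rintro x ⟨s, rfl⟩
    simp only [SetLike.mem_coe]
    rw [hmem]
    intro t
    have := congrArg (fun M => M t s) h1
    simpa [Matrix.mul_apply] using this
  have hG2rank : (G2 α k r δ).rank = k := by
    have h := (ParityAux.G2_rows_indep α hα δ h6 hkn hr2 hrk).rank_matrix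
    rw [Fintype.card_fin] at h
    exact h
  have hfinK : Module.finrank F K = n + 2 - k := by
    have hr := LinearMap.finrank_range_add_finrank_ker (G2 α k r δ).mulVecLin
    rw [Module.finrank_fintype_fun_eq_card, Fintype.card_fin] at hr
    have hrank : Module.finrank F (LinearMap.range (G2 α k r δ).mulVecLin) = k := hG2rank
    rw [hrank] at hr
    rw [hK]
    omega
  have hfinH : Module.finrank F (rowSpan (H2 α k r b)) = n - k + 2 := by
    rw [rowSpan, finrank_span_eq_card h2]
    simp
  have hEq : rowSpan (H2 α k r b) = K := by
    refine Submodule.eq_of_le_of_finrank_le hle ?_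
    rw [hfinK, hfinH]
    omega
  rw [hKd, hEq]
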